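/- arXiv:1203.3228 — 3 statements merged into one kernel-verified Lean document; each statement's English description precedes it below -/
import Mathlib

section
/- Let N : ℝ → ℝ satisfy |N(x)| ≤ C|x|^{p+1} for all x ∈ ℝ, with p > 1. If {u_n} ⊂ H¹(ℝ) is bounded in H¹(ℝ) and sup_{x₀∈ℝ} ∫_{B₁(x₀)} u_n² dx → 0 as n → ∞ (the 'vanishing' property), then ∫_ℝ N(u_n) dx → 0. -/
open MeasureTheory Filter

section helpers


lemma amgm_aux {t : ℝ} (ht : 0 < t) (a b : ℝ) : 2 * |a| * |b| ≤ t * a ^ 2 + b ^ 2 / t := by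
  have hs : Real.sqrt t ≠ 0 := by positivity
  calc 2 * |a| * |b| = 2 * (Real.sqrt t * |a|) * (|b| / Real.sqrt t) := by field_simp
    _ ≤ (Real.sqrt t * |a|) ^ 2 + (|b| / Real.sqrt t) ^ 2 := two_mul_le_add_sq _ _
    _ = t * a ^ 2 + b ^ 2 / t := by
        rw [mul_pow, div_pow, Real.sq_sqrt ht.le, sq_abs, sq_abs]

lemma pointwise_sq_bound {u : ℝ → ℝ} (hu : ContDiff ℝ 1 u) {t ε D : ℝ} (ht : 0 < t)
    (hloc : ∀ x₀ : ℝ, ∫ z in Set.Ioo (x₀ - 1) (x₀ + 1), u z ^ 2 ≤ ε)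
    (hloc' : ∀ x₀ : ℝ, ∫ z in Set.Ioo (x₀ - 1) (x₀ + 1), deriv u z ^ 2 ≤ D)
    (x : ℝ) : u x ^ 2 ≤ (1 / 2 + t) * ε + D / t := by
  have hc : Continuous u := hu.continuous
  have hc' : Continuous (deriv u) := hu.continuous_deriv le_rfl
  -- a point where u² is small
  obtain ⟨y, hy, hymin⟩ := isCompact_Icc.exists_isMinOn
    (Set.nonempty_Icc.2 (by linarith : x - 1 ≤ x + 1)) ((hc.pow 2).continuousOn
      : ContinuousOn (fun z => u z ^ 2) (Set.Icc (x - 1) (x + 1)))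
  obtain ⟨hy1, hy2⟩ := hy
  have hmeanraw : u y ^ 2 * (volume (Set.Icc (x - 1) (x + 1))).toReal
      ≤ ∫ z in Set.Icc (x - 1) (x + 1), u z ^ 2 :=
    setIntegral_ge_of_const_le_real measurableSet_Icc (by rw [Real.volume_Icc]; exact ENNReal.ofReal_ne_top)
      (fun z hz => hymin hz) ((hc.pow 2).integrableOn_Icc)
  rw [Real.volume_Icc, show x + 1 - (x - 1) = 2 by ring, ENNReal.toReal_ofReal (by norm_num),
    integral_Icc_eq_integral_Ioo] at hmeanraw
  have hmean : u y ^ 2 ≤ ε / 2 := by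
    have := hloc x
    linarith
  -- fundamental theorem of calculus
  have hftc : ∫ z in y..x, 2 * u z * deriv u z = u x ^ 2 - u y ^ 2 := by
    apply intervalIntegral.integral_eq_sub_of_hasDerivAt
    · intro z _
      simpa using ((hu.differentiable one_ne_zero) z).hasDerivAt.fun_pow 2
    · exact ((continuous_const.mul hc).mul hc').intervalIntegrable _ _
  -- bound on the interval integral
  have hsub : Set.uIoc y x ⊆ Set.Ioc (x - 1) (x + 1) := by
    intro z hz
    rw [Set.mem_uIoc] at hz
    rcases hz with ⟨h1, h2⟩ | ⟨h1, h2⟩ <;> exact ⟨by linarith, by linarith⟩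
  have hInt : IntegrableOn (fun z => t * u z ^ 2 + deriv u z ^ 2 / t)
      (Set.Ioc (x - 1) (x + 1)) volume :=
    ((continuous_const.mul (hc.pow 2)).add ((hc'.pow 2).div_const t)).integrableOn_Icc.mono_set
      Set.Ioc_subset_Icc_self
  have habs : |∫ z in y..x, 2 * u z * deriv u z|
      ≤ ∫ z in Set.Ioc (x - 1) (x + 1), (t * u z ^ 2 + deriv u z ^ 2 / t) := by
    calc |∫ z in y..x, 2 * u z * deriv u z|
        ≤ ∫ z in Set.uIoc y x, 2 * |u z| * |deriv u z| := by
          simpa [Real.norm_eq_abs] using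
            intervalIntegral.norm_integral_le_integral_norm_uIoc
              (f := fun z => 2 * u z * deriv u z) (μ := volume) (a := y) (b := x)
      _ ≤ ∫ z in Set.uIoc y x, (t * u z ^ 2 + deriv u z ^ 2 / t) := by
          apply setIntegral_mono_on
          · exact (((continuous_const.mul hc.abs).mul hc'.abs).integrableOn_Icc).mono_set
              Set.uIoc_subset_uIcc
          · exact hInt.mono_set hsub
          · exact measurableSet_uIoc
          · exact fun z _ => amgm_aux ht (u z) (deriv u z)
      _ ≤ ∫ z in Set.Ioc (x - 1) (x + 1), (t * u z ^ 2 + deriv u z ^ 2 / t) := by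
          apply setIntegral_mono_set hInt
          · exact Filter.Eventually.of_forall fun z => by positivity
          · exact Filter.Eventually.of_forall hsub
  -- split and bound the right-hand side
  have hsplit : ∫ z in Set.Ioc (x - 1) (x + 1), (t * u z ^ 2 + deriv u z ^ 2 / t)
      ≤ t * ε + D / t := by
    rw [integral_add (f := fun z => t * u z ^ 2) (g := fun z => deriv u z ^ 2 / t)
      (μ := volume.restrict (Set.Ioc (x - 1) (x + 1)))
      (by exact (continuous_const.mul (hc.pow 2)).integrableOn_Icc.mono_set Set.Ioc_subset_Icc_self)
      (by exact ((hc'.pow 2).div_const t).integrableOn_Icc.mono_set Set.Ioc_subset_Icc_self),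
      integral_const_mul, integral_div, integral_Ioc_eq_integral_Ioo,
      integral_Ioc_eq_integral_Ioo]
    have h1 := hloc x
    have h2 := hloc' x
    gcongr
  have hle : u x ^ 2 - u y ^ 2 ≤ t * ε + D / t := by
    rw [← hftc]
    exact le_trans (le_trans (le_abs_self _) habs) hsplit
  linarith



lemma abs_rpow_le_aux {p : ℝ} (hp : 1 < p) {a M : ℝ} (h : a ^ 2 ≤ M) :
    |a| ^ (p + 1) ≤ M ^ ((p - 1) / 2) * a ^ 2 := by
  rcases eq_or_ne a 0 with rfl | ha
  · simp [Real.zero_rpow (show p + 1 ≠ 0 by linarith)]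
  · have ha' : 0 < |a| := abs_pos.2 ha
    have h1 : |a| ^ (p + 1) = |a| ^ (p - 1) * a ^ 2 := by
      rw [show p + 1 = (p - 1) + 2 by ring, Real.rpow_add ha', Real.rpow_two, sq_abs]
    have h2 : |a| ^ (p - 1) = (a ^ 2) ^ ((p - 1) / 2) := by
      rw [← sq_abs, ← Real.rpow_two, ← Real.rpow_mul (abs_nonneg a)]
      rw [show 2 * ((p - 1) / 2) = p - 1 by ring]
    rw [h1, h2]
    exact mul_le_mul_of_nonneg_right
      (Real.rpow_le_rpow (sq_nonneg a) h (by linarith)) (sq_nonneg a)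


lemma integral_sq_eq_sq_eLpNorm {f : ℝ → ℝ} (hf : MemLp f 2 volume) :
    ∫ x : ℝ, f x ^ 2 = (eLpNorm f 2 volume).toReal ^ 2 := by
  rw [hf.eLpNorm_eq_integral_rpow_norm two_ne_zero ENNReal.ofNat_ne_top]
  rw [ENNReal.toReal_ofReal (Real.rpow_nonneg (integral_nonneg fun x => by positivity) _)]
  rw [← Real.rpow_natCast _ 2, ← Real.rpow_mul (integral_nonneg fun x => by positivity)]
  norm_num

end helpers


/-- If `|N(x)| ≤ C|x|^{p+1}` with `p > 1`, and `{u_n} ⊂ H¹(ℝ)` is bounded in `H¹(ℝ)` and has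
the 'vanishing' property `sup_{x₀} ∫_{B₁(x₀)} u_n² dx → 0`, then `∫ N(u_n) dx → 0`. -/
theorem vanishing_kills_nonlinearity
    (N : ℝ → ℝ) (C p : ℝ) (hC : 0 ≤ C) (hp : 1 < p)
    (hNc : Continuous N) (hNb : ∀ x : ℝ, |N x| ≤ C * |x| ^ (p + 1))
    (u : ℕ → ℝ → ℝ) (B : ℝ)
    (hdiff : ∀ n, ContDiff ℝ 1 (u n))
    (hmem : ∀ n, MemLp (u n) 2 volume)
    (hmem' : ∀ n, MemLp (deriv (u n)) 2 volume)
    (hbdd : ∀ n, (eLpNorm (u n) 2 volume).toReal ^ 2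
      + (eLpNorm (deriv (u n)) 2 volume).toReal ^ 2 ≤ B)
    (hvan : Tendsto
      (fun n => ⨆ x₀ : ℝ, ∫ x in Set.Ioo (x₀ - 1) (x₀ + 1), (u n x) ^ 2)
      atTop (nhds 0)) :
    Tendsto (fun n => ∫ x : ℝ, N (u n x)) atTop (nhds 0) := by
    classical
  set ε : ℕ → ℝ := fun n => ⨆ x₀ : ℝ, ∫ x in Set.Ioo (x₀ - 1) (x₀ + 1), (u n x) ^ 2 with hεdef
  have hB : 0 ≤ B := le_trans (by positivity) (hbdd 0)
  have husq : ∀ n, Integrable (fun x => u n x ^ 2) volume := fun n => (hmem n).integrable_sq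
  have hu'sq : ∀ n, Integrable (fun x => deriv (u n) x ^ 2) volume :=
    fun n => (hmem' n).integrable_sq
  have hintu : ∀ n, ∫ x : ℝ, u n x ^ 2 ≤ B := by
    intro n
    rw [integral_sq_eq_sq_eLpNorm (hmem n)]
    nlinarith [hbdd n, sq_nonneg (eLpNorm (deriv (u n)) 2 volume).toReal]
  have hintu' : ∀ n, ∫ x : ℝ, deriv (u n) x ^ 2 ≤ B := by
    intro n
    rw [integral_sq_eq_sq_eLpNorm (hmem' n)]
    nlinarith [hbdd n, sq_nonneg (eLpNorm (u n) 2 volume).toReal]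
  have hloc : ∀ n x₀, ∫ x in Set.Ioo (x₀ - 1) (x₀ + 1), u n x ^ 2 ≤ ε n := by
    intro n x₀
    apply le_ciSup (f := fun x₀ : ℝ => ∫ x in Set.Ioo (x₀ - 1) (x₀ + 1), u n x ^ 2)
    refine ⟨B, ?_⟩
    rintro _ ⟨x₁, rfl⟩
    exact le_trans (setIntegral_le_integral (husq n)
      (Filter.Eventually.of_forall fun x => sq_nonneg _)) (hintu n)
  have hloc' : ∀ n x₀, ∫ x in Set.Ioo (x₀ - 1) (x₀ + 1), deriv (u n) x ^ 2 ≤ B := by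
    intro n x₀
    exact le_trans (setIntegral_le_integral (hu'sq n)
      (Filter.Eventually.of_forall fun x => sq_nonneg _)) (hintu' n)
  have hεnn : ∀ n, 0 ≤ ε n :=
    fun n => le_trans (integral_nonneg fun x => sq_nonneg _) (hloc n 0)
  set e : ℝ := (p - 1) / 2 with hedef
  have he : 0 < e := by simp only [hedef]; linarith
  -- key quantitative bound
  have key : ∀ n, ∀ t : ℝ, 0 < t →
      |∫ x : ℝ, N (u n x)| ≤ C * ((1 / 2 + t) * ε n + B / t) ^ e * B := by
    intro n t ht
    set M : ℝ := (1 / 2 + t) * ε n + B / t with hMdef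
    have hpt : ∀ x, u n x ^ 2 ≤ M :=
      pointwise_sq_bound (hdiff n) ht (hloc n) (hloc' n)
    have hdom : ∀ x, |N (u n x)| ≤ C * M ^ e * u n x ^ 2 := by
      intro x
      refine (hNb (u n x)).trans ?_
      rw [mul_assoc]
      exact mul_le_mul_of_nonneg_left (abs_rpow_le_aux hp (hpt x)) hC
    calc |∫ x : ℝ, N (u n x)| ≤ ∫ x : ℝ, |N (u n x)| := by
          simpa [Real.norm_eq_abs] using
            norm_integral_le_integral_norm (fun x => N (u n x)) (μ := volume)
      _ ≤ ∫ x : ℝ, C * M ^ e * u n x ^ 2 :=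
          integral_mono_of_nonneg (Filter.Eventually.of_forall fun x => abs_nonneg _)
            ((husq n).const_mul _) (Filter.Eventually.of_forall hdom)
      _ = C * M ^ e * ∫ x : ℝ, u n x ^ 2 := integral_const_mul _ _
      _ ≤ C * M ^ e * B := by
          have hM0 : 0 ≤ M := le_trans (sq_nonneg (u n 0)) (hpt 0)
          have : 0 ≤ C * M ^ e := by positivity
          exact mul_le_mul_of_nonneg_left (hintu n) this
  -- conclude
  rw [Metric.tendsto_atTop]
  intro δ hδ
  -- continuity of s ↦ C * s ^ e * B at 0
  have hcont : ContinuousAt (fun s : ℝ => C * s ^ e * B) 0 :=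
    (continuousAt_const.mul (Real.continuousAt_rpow_const 0 e (Or.inr he.le))).mul
      continuousAt_const
  have h0 : C * (0 : ℝ) ^ e * B = 0 := by
    rw [Real.zero_rpow he.ne']; ring
  obtain ⟨η, hη, himp⟩ := Metric.continuousAt_iff.1 hcont δ hδ
  set t : ℝ := 2 * (B + 1) / η with htdef
  have ht : 0 < t := by positivity
  have hBt : B / t < η / 2 := by
    rw [htdef, div_div_eq_mul_div, div_lt_iff₀ (by positivity)]
    nlinarith
  have hη' : 0 < η / 2 / (1 / 2 + t) := by positivity
  obtain ⟨n₀, hn₀⟩ := (Metric.tendsto_atTop.1 hvan) (η / 2 / (1 / 2 + t)) hη'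
  refine ⟨n₀, fun n hn => ?_⟩
  have hεsmall : ε n < η / 2 / (1 / 2 + t) := by
    have := hn₀ n hn
    rw [Real.dist_eq, sub_zero, abs_of_nonneg (hεnn n)] at this
    exact this
  set s : ℝ := (1 / 2 + t) * ε n + B / t with hsdef
  have hs0 : 0 ≤ s := add_nonneg (mul_nonneg (by linarith) (hεnn n)) (div_nonneg hB ht.le)
  have hsη : s < η := by
    have h1 : (1 / 2 + t) * ε n < η / 2 := by
      rw [mul_comm]
      calc ε n * (1 / 2 + t) < η / 2 / (1 / 2 + t) * (1 / 2 + t) := by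
            apply mul_lt_mul_of_pos_right hεsmall (by linarith)
        _ = η / 2 := by field_simp
    simp only [hsdef]; linarith
  have hdist : dist s (0 : ℝ) < η := by
    rw [Real.dist_eq, sub_zero, abs_of_nonneg hs0]; exact hsη
  have hfin := himp hdist
  rw [Real.dist_eq, h0, sub_zero] at hfin
  rw [Real.dist_eq, sub_zero]
  calc |∫ x : ℝ, N (u n x)| ≤ C * s ^ e * B := key n t ht
    _ ≤ |C * s ^ e * B| := le_abs_self _
    _ < δ := hfin
end

section
/- Let E_lw(w) = −∫_ℝ [ a (w^{(j)})² + N_{p+1}(w) ] dx with a < 0 (so the quadratic part is coercive), where |N_{p+1}(x)| ≤ C|x|^{p+1} and 2 ≤ p < 4j+1. Then E_lw is bounded below on the constraint set W₁ = { w ∈ H^j(ℝ) : (1/2)∫ w² dx = 1 }. -/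
open MeasureTheory Real Filter

/-- Young-type absorption: for `θ < 2`, `c x^θ ≤ ε x² + K`. -/
lemma young_absorb (c θ ε : ℝ) (hc : 0 ≤ c) (hθ0 : 0 ≤ θ) (hθ2 : θ < 2) (hε : 0 < ε) :
    ∃ K : ℝ, 0 ≤ K ∧ ∀ x : ℝ, 0 ≤ x → c * x ^ θ ≤ ε * x ^ 2 + K := by
  rcases eq_or_lt_of_le hc with h0 | hcpos
  · exact ⟨0, le_rfl, fun x hx => by
      rw [← h0]; have : (0:ℝ) ≤ ε * x ^ 2 := by positivity
      simpa using this⟩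
  set R : ℝ := max 1 ((c / ε) ^ (1 / (2 - θ))) with hR
  have hR1 : (1:ℝ) ≤ R := le_max_left _ _
  have hR0 : (0:ℝ) < R := lt_of_lt_of_le one_pos hR1
  refine ⟨c * R ^ θ, by positivity, fun x hx => ?_⟩
  rcases le_or_gt x R with hxR | hxR
  · have h1 : c * x ^ θ ≤ c * R ^ θ :=
      mul_le_mul_of_nonneg_left (Real.rpow_le_rpow hx hxR hθ0) hc
    have h2 : (0:ℝ) ≤ ε * x ^ 2 := by positivity
    linarith
  · -- x > R : show c x^θ ≤ ε x²
    have hx0 : 0 < x := lt_trans hR0 hxR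
    have h2θ : 0 < 2 - θ := by linarith
    have hkey : c ≤ ε * x ^ (2 - θ) := by
      have h1 : (c / ε) ^ (1 / (2 - θ)) ≤ R := le_max_right _ _
      have h2 : ((c / ε) ^ (1 / (2 - θ))) ^ (2 - θ) ≤ x ^ (2 - θ) :=
        Real.rpow_le_rpow (Real.rpow_nonneg (by positivity) _) (h1.trans hxR.le) h2θ.le
      rwa [← Real.rpow_mul (by positivity), one_div, inv_mul_cancel₀ h2θ.ne',
        Real.rpow_one, div_le_iff₀ hε, mul_comm] at h2
    have hxθ : (0:ℝ) ≤ x ^ θ := Real.rpow_nonneg hx0.le _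
    have : c * x ^ θ ≤ ε * x ^ (2 - θ) * x ^ θ := mul_le_mul_of_nonneg_right hkey hxθ
    have hsplit : ε * x ^ (2 - θ) * x ^ θ = ε * x ^ (2:ℝ) := by
      rw [mul_assoc, ← Real.rpow_add hx0]; ring_nf
    rw [hsplit, Real.rpow_two] at this
    have h2 : (0:ℝ) ≤ c * R ^ θ := by positivity
    linarith

/-- Log-convexity chain: from `A i ² ≤ A (i-1) A (i+1)` deduce `A 1 ^ n ≤ A 0 ^ (n-1) * A n`. -/
lemma chain_pow (n : ℕ) (hn : 1 ≤ n) (A : ℕ → ℝ) (hA : ∀ i, 0 ≤ A i) (h0 : 0 < A 0)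
    (hc : ∀ i, 1 ≤ i → i + 1 ≤ n → A i ^ 2 ≤ A (i - 1) * A (i + 1)) :
    A 1 ^ n ≤ A 0 ^ (n - 1) * A n := by
  rcases eq_or_lt_of_le hn with rfl | hn2
  · simpa using le_rfl
  have hn2 : 2 ≤ n := hn2
  by_cases hz : ∃ i, 1 ≤ i ∧ i ≤ n ∧ A i = 0
  · -- then A 1 = 0
    have key : ∀ i, 1 ≤ i → i ≤ n → A i = 0 → A 1 = 0 := by
      intro i
      induction i using Nat.strong_induction_on with
      | _ i IH =>
        intro h1 hle h0'
        rcases eq_or_lt_of_le h1 with rfl | h2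
        · exact h0'
        · have h2 : 2 ≤ i := h2
          have hstep : A (i - 1) ^ 2 ≤ A (i - 1 - 1) * A (i - 1 + 1) :=
            hc (i - 1) (by omega) (by omega)
          have : A (i - 1 + 1) = 0 := by rwa [show i - 1 + 1 = i by omega]
          rw [this, mul_zero] at hstep
          have hz' : A (i - 1) = 0 :=
            le_antisymm (by nlinarith [hA (i-1)]) (hA (i - 1)) |>.symm ▸ by
              nlinarith [hA (i - 1), sq_nonneg (A (i-1))]
          exact IH (i - 1) (by omega) (by omega) (by omega) hz'
    obtain ⟨i, h1, hle, h0'⟩ := hz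
    have hA1 : A 1 = 0 := key i h1 hle h0'
    rw [hA1, zero_pow (by omega)]
    exact mul_nonneg (pow_nonneg h0.le _) (hA n)
  · push_neg at hz
    have hpos : ∀ i, 1 ≤ i → i ≤ n → 0 < A i := fun i h1 h2 =>
      lt_of_le_of_ne (hA i) (fun h => hz i h1 h2 h.symm)
    -- step: A 1 * A k ≤ A 0 * A (k+1) for 1 ≤ k, k+1 ≤ n
    have step : ∀ k, 1 ≤ k → k + 1 ≤ n → A 1 * A k ≤ A 0 * A (k + 1) := by
      intro k
      induction k using Nat.strong_induction_on with
      | _ k IH =>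
        intro h1 hk1
        rcases eq_or_lt_of_le h1 with rfl | h2
        · have := hc 1 le_rfl hk1
          simpa [pow_two] using this
        · have h2 : 2 ≤ k := h2
          have IH' : A 1 * A (k - 1) ≤ A 0 * A k := by
            have := IH (k - 1) (by omega) (by omega) (by omega)
            rwa [show k - 1 + 1 = k by omega] at this
          have hck : A k ^ 2 ≤ A (k - 1) * A (k + 1) := hc k (by omega) hk1
          have hAk : 0 < A k := hpos k (by omega) (by omega)
          have hAk1 : 0 < A (k - 1) := hpos (k - 1) (by omega) (by omega)
          have hA1 : 0 < A 1 := hpos 1 le_rfl (by omega)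
          nlinarith [hA (k + 1), mul_pos hA1 hAk]
    -- main induction
    have main : ∀ k, 1 ≤ k → k ≤ n → A 1 ^ k ≤ A 0 ^ (k - 1) * A k := by
      intro k
      induction k using Nat.strong_induction_on with
      | _ k IH =>
        intro h1 hk
        rcases eq_or_lt_of_le h1 with rfl | h2
        · simpa using le_rfl
        · have h2 : 2 ≤ k := h2
          have IH' : A 1 ^ (k - 1) ≤ A 0 ^ (k - 1 - 1) * A (k - 1) :=
            IH (k - 1) (by omega) (by omega) (by omega)
          have hstep : A 1 * A (k - 1) ≤ A 0 * A k := by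
            have := step (k - 1) (by omega) (by omega)
            rwa [show k - 1 + 1 = k by omega] at this
          have hA1 : 0 ≤ A 1 := hA 1
          calc A 1 ^ k = A 1 ^ (k - 1) * A 1 := by
                rw [← pow_succ, show k - 1 + 1 = k by omega]
            _ ≤ (A 0 ^ (k - 1 - 1) * A (k - 1)) * A 1 :=
                mul_le_mul_of_nonneg_right IH' hA1
            _ = A 0 ^ (k - 1 - 1) * (A 1 * A (k - 1)) := by ring
            _ ≤ A 0 ^ (k - 1 - 1) * (A 0 * A k) :=
                mul_le_mul_of_nonneg_left hstep (pow_nonneg h0.le _)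
            _ = A 0 ^ (k - 1 - 1 + 1) * A k := by ring
            _ = A 0 ^ (k - 1) * A k := by rw [show k - 1 - 1 + 1 = k - 1 by omega]
    exact main n hn (le_refl n)
open MeasureTheory Real

lemma cs_integral (u v : ℝ → ℝ) (hu : MemLp u 2 (volume : Measure ℝ))
    (hv : MemLp v 2 (volume : Measure ℝ)) :
    ∫ x, |u x| * |v x| ≤ Real.sqrt (∫ x, u x ^ 2) * Real.sqrt (∫ x, v x ^ 2) := by
  have hpq : Real.HolderConjugate 2 2 := Real.HolderConjugate.two_two
  have hu' : MemLp u (ENNReal.ofReal 2) volume := by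
    simpa [ENNReal.ofReal_ofNat] using hu
  have hv' : MemLp v (ENNReal.ofReal 2) volume := by
    simpa [ENNReal.ofReal_ofNat] using hv
  have h := integral_mul_norm_le_Lp_mul_Lq hpq hu' hv'
  have e1 : ∀ (f : ℝ → ℝ), (∫ x, ‖f x‖ ^ (2:ℝ)) = ∫ x, f x ^ 2 := by
    intro f; congr 1; funext x; rw [Real.rpow_two, Real.norm_eq_abs, sq_abs]
  have e2 : ∀ y : ℝ, y ^ (1/(2:ℝ)) = Real.sqrt y := fun y => (Real.sqrt_eq_rpow y).symm
  rw [e1, e1, e2, e2] at h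
  simpa using h


/-- The long-wave energy `E_lw(w) = −∫ (a (w^(j))² + N_{p+1}(w))` with `a < 0` and
`|N_{p+1}(x)| ≤ C|x|^{p+1}`, `2 ≤ p < 4j+1`, is bounded below on the constraint set
`W₁ = {w ∈ H^j(ℝ) : (1/2)∫ w² = 1}`. -/
theorem long_wave_energy_bounded_below
    (j : ℕ) (hj : 1 ≤ j) (p : ℝ) (hp2 : 2 ≤ p) (hp4 : p < 4 * (j : ℝ) + 1)
    (a : ℝ) (ha : a < 0) (N : ℝ → ℝ) (hNc : Continuous N) (C : ℝ)
    (hNb : ∀ x : ℝ, |N x| ≤ C * |x| ^ (p + 1)) :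
    ∃ B : ℝ, ∀ w : ℝ → ℝ, ContDiff ℝ j w →
      (∀ i : ℕ, i ≤ j → MemLp (iteratedDeriv i w) 2 volume) →
      ((1 : ℝ) / 2) * (∫ x : ℝ, (w x) ^ 2) = 1 →
      B ≤ -∫ x : ℝ, (a * (iteratedDeriv j w x) ^ 2 + N (w x)) := by
  have hC0 : 0 ≤ C := by
    have h := hNb 1
    have h1 : |(1:ℝ)| ^ (p + 1) = 1 := by rw [abs_one, Real.one_rpow]
    rw [h1, mul_one] at h
    exact (abs_nonneg _).trans h
  have hj0 : (0:ℝ) < j := by exact_mod_cast hj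
  set θ : ℝ := (p - 1) / (2 * j) with hθdef
  have hθ0 : 0 ≤ θ := by
    apply div_nonneg (by linarith) (by linarith)
  have hθ2 : θ < 2 := by
    rw [hθdef, div_lt_iff₀ (by linarith)]
    linarith
  set c5 : ℝ := 2 * C * (2 * Real.sqrt 2) ^ ((p - 1) / 2) * ((Real.sqrt 2 ^ (j - 1) : ℝ)) ^ θ
    with hc5def
  have hc5 : 0 ≤ c5 := by
    have h1 : (0:ℝ) ≤ Real.sqrt 2 := Real.sqrt_nonneg 2
    positivity
  obtain ⟨K, hK0, hKx⟩ := young_absorb c5 θ (-a) hc5 hθ0 hθ2 (by linarith)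
  refine ⟨-K, fun w hw hmem hcon => ?_⟩

  -- basic facts about iterated derivatives
  set f : ℕ → ℝ → ℝ := fun i => iteratedDeriv i w with hfdef
  have hf0 : f 0 = w := iteratedDeriv_zero
  have hmem' : ∀ i, i ≤ j → MemLp (f i) 2 volume := fun i hi => hmem i hi
  have hderivAt : ∀ i, i < j → ∀ x, HasDerivAt (f i) (f (i + 1) x) x := by
    intro i hi x
    have hd : DifferentiableAt ℝ (f i) x :=
      (hw.differentiable_iteratedDeriv i (by exact_mod_cast hi)).differentiableAt
    have he : f (i + 1) = deriv (f i) := iteratedDeriv_succ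
    rw [he]
    exact hd.hasDerivAt
  have hsq : ∀ i, i ≤ j → Integrable (fun x => f i x ^ 2) := fun i hi =>
    (hmem' i hi).integrable_sq
  have hprod : ∀ i k, i ≤ j → k ≤ j → Integrable (fun x => f i x * f k x) := by
    intro i k hi hk
    have h1 : MemLp ((f i) • (f k)) 1 volume :=
      (hmem' k hk).smul (hmem' i hi)
    have h2 : (f i) • (f k) = fun x => f i x * f k x := by
      funext x; simp [Pi.smul_apply', smul_eq_mul]
    rw [h2] at h1
    exact memLp_one_iff_integrable.mp h1
  -- integration by parts
  have hIBP : ∀ i, i + 2 ≤ j →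
      (∫ x, f (i + 1) x ^ 2) = - ∫ x, f i x * f (i + 2) x := by
    intro i hi
    have hg : ∀ x, HasDerivAt (fun y => f i y * f (i + 1) y)
        (f (i + 1) x ^ 2 + f i x * f (i + 2) x) x := by
      intro x
      have h1 := hderivAt i (by omega) x
      have h2 := hderivAt (i + 1) (by omega) x
      have h3 : HasDerivAt (fun y => f i y * f (i + 1) y) _ x := h1.mul h2
      convert h3 using 1
      ring
    have hint1 : Integrable (fun x => f (i + 1) x ^ 2) := hsq (i + 1) (by omega)
    have hint2 : Integrable (fun x => f i x * f (i + 2) x) := hprod i (i + 2) (by omega) (by omega)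
    have hint' : Integrable (fun x => f (i + 1) x ^ 2 + f i x * f (i + 2) x) := hint1.add hint2
    have hint : Integrable (fun x => f i x * f (i + 1) x) := hprod i (i + 1) (by omega) (by omega)
    have h0 := integral_eq_zero_of_hasDerivAt_of_integrable hg hint' hint
    rw [integral_add hint1 hint2] at h0
    linarith
  -- the L² norms
  set A : ℕ → ℝ := fun i => Real.sqrt (∫ x, f i x ^ 2) with hAdef
  have hAnn : ∀ i, 0 ≤ A i := fun i => Real.sqrt_nonneg _
  have hAsq : ∀ i, A i ^ 2 = ∫ x, f i x ^ 2 := fun i =>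
    Real.sq_sqrt (integral_nonneg fun x => sq_nonneg _)
  have hw2 : (∫ x, w x ^ 2) = 2 := by linarith
  have hA0 : A 0 = Real.sqrt 2 := by
    rw [hAdef]
    simp only [hf0, hw2]
  -- the chain inequality
  have hchain : A 1 ^ j ≤ A 0 ^ (j - 1) * A j := by
    apply chain_pow j hj A hAnn (by rw [hA0]; positivity)
    intro i h1 hij
    have h2 := hIBP (i - 1) (by omega)
    rw [show i - 1 + 1 = i by omega, show i - 1 + 2 = i + 1 by omega] at h2
    have hcs := cs_integral (f (i - 1)) (f (i + 1)) (hmem' (i - 1) (by omega))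
      (hmem' (i + 1) (by omega))
    have habs : - (∫ x, f (i - 1) x * f (i + 1) x) ≤ ∫ x, |f (i - 1) x| * |f (i + 1) x| := by
      have h3 : ‖∫ x, f (i - 1) x * f (i + 1) x‖ ≤ ∫ x, ‖f (i - 1) x * f (i + 1) x‖ :=
        norm_integral_le_integral_norm _
      have h4 : (∫ x, ‖f (i - 1) x * f (i + 1) x‖) = ∫ x, |f (i - 1) x| * |f (i + 1) x| := by
        congr 1; funext x; rw [Real.norm_eq_abs, abs_mul]
      rw [h4, Real.norm_eq_abs] at h3
      have := neg_abs_le (∫ x, f (i - 1) x * f (i + 1) x)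
      linarith
    rw [hAsq i, h2]
    calc - (∫ x, f (i - 1) x * f (i + 1) x) ≤ ∫ x, |f (i - 1) x| * |f (i + 1) x| := habs
      _ ≤ Real.sqrt (∫ x, f (i - 1) x ^ 2) * Real.sqrt (∫ x, f (i + 1) x ^ 2) := hcs
      _ = A (i - 1) * A (i + 1) := rfl
  -- the sup bound
  have hwint : Integrable (fun x => w x ^ 2) := by
    have := hsq 0 (by omega)
    rwa [hf0] at this
  have hsup : ∀ x, w x ^ 2 ≤ 2 * (A 0 * A 1) := by
    have hg : ∀ x, HasDerivAt (fun y => w y ^ 2) (2 * (w x * f 1 x)) x := by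
      intro x
      have h1 := hderivAt 0 (by omega) x
      rw [hf0] at h1
      have h2 : HasDerivAt (fun y => w y ^ 2) _ x := h1.pow 2
      convert h2 using 1
      ring
    have hg'int : Integrable (fun x => 2 * (w x * f 1 x)) := by
      have h1 := (hprod 0 1 (by omega) hj).const_mul 2
      simpa [hf0] using h1
    have htop : Tendsto (fun y => w y ^ 2) atTop (nhds 0) :=
      tendsto_zero_of_hasDerivAt_of_integrableOn_Ioi (a := 0) (fun x _ => hg x)
        hg'int.integrableOn hwint.integrableOn
    intro x
    have hIoi := integral_Ioi_of_hasDerivAt_of_tendsto' (a := x) (fun y _ => hg y)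
      hg'int.integrableOn htop
    have h1 : w x ^ 2 = - ∫ y in Set.Ioi x, 2 * (w y * f 1 y) := by rw [hIoi]; ring
    have h2 : ‖∫ y in Set.Ioi x, 2 * (w y * f 1 y)‖ ≤ ∫ y in Set.Ioi x, ‖2 * (w y * f 1 y)‖ :=
      norm_integral_le_integral_norm _
    have h3 : (∫ y in Set.Ioi x, ‖2 * (w y * f 1 y)‖) ≤ ∫ y, ‖2 * (w y * f 1 y)‖ :=
      setIntegral_le_integral hg'int.norm (Eventually.of_forall fun y => norm_nonneg _)
    have h4 : (∫ y, ‖2 * (w y * f 1 y)‖) ≤ 2 * (A 0 * A 1) := by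
      have hcs := cs_integral w (f 1) (hf0 ▸ hmem' 0 (by omega))
        (hmem' 1 hj)
      have he : (fun y => ‖2 * (w y * f 1 y)‖) = fun y => 2 * (|w y| * |f 1 y|) := by
        funext y
        rw [Real.norm_eq_abs, abs_mul, abs_mul]
        norm_num
      rw [he, integral_const_mul]
      have hA0' : A 0 = Real.sqrt (∫ x, w x ^ 2) := by rw [hAdef]; simp only [hf0]
      have : Real.sqrt (∫ x, w x ^ 2) * Real.sqrt (∫ x, f 1 x ^ 2) = A 0 * A 1 := by
        rw [hA0']
      linarith
    rw [h1]
    have h5 : - (∫ y in Set.Ioi x, 2 * (w y * f 1 y)) ≤ ‖∫ y in Set.Ioi x, 2 * (w y * f 1 y)‖ := by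
      rw [Real.norm_eq_abs (∫ y in Set.Ioi x, 2 * (w y * f 1 y))]
      exact neg_le_abs (∫ y in Set.Ioi x, 2 * (w y * f 1 y))
    linarith
  -- final assembly
  by_cases hInt : Integrable (fun x => a * f j x ^ 2 + N (w x))
  · -- integrable case
    have hfjint : Integrable (fun x => a * f j x ^ 2) := (hsq j le_rfl).const_mul a
    have hNint : Integrable (fun x => N (w x)) := by
      have h1 := hInt.sub hfjint
      refine h1.congr (Filter.Eventually.of_forall fun x => ?_)
      simp only [Pi.sub_apply]
      ring
    have hsplit : (∫ x, (a * f j x ^ 2 + N (w x))) = a * (∫ x, f j x ^ 2) + ∫ x, N (w x) := by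
      rw [integral_add hfjint hNint, integral_const_mul]
    set S : ℝ := 2 * (A 0 * A 1) with hSdef
    have hS0 : 0 ≤ S := by
      have := mul_nonneg (hAnn 0) (hAnn 1); positivity
    have hdom : ∀ x, |N (w x)| ≤ C * S ^ ((p - 1) / 2) * w x ^ 2 := by
      intro x
      have h1 := hNb (w x)
      have e : |w x| ^ (p + 1) = (w x ^ 2) ^ ((p + 1) / 2) := by
        rw [← sq_abs, ← Real.rpow_natCast |w x| 2, ← Real.rpow_mul (abs_nonneg _)]
        congr 1
        push_cast
        ring
      have e2 : (w x ^ 2) ^ ((p + 1) / 2) = (w x ^ 2) ^ ((p - 1) / 2) * (w x ^ 2) ^ (1:ℝ) := by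
        rw [← Real.rpow_add' (sq_nonneg _) (ne_of_gt (by linarith : (0:ℝ) < (p-1)/2 + 1))]
        congr 1
        ring
      have e3 : (w x ^ 2) ^ ((p - 1) / 2) ≤ S ^ ((p - 1) / 2) :=
        Real.rpow_le_rpow (sq_nonneg _) (hsup x) (by linarith)
      have e4 : (w x ^ 2) ^ (1:ℝ) = w x ^ 2 := Real.rpow_one _
      calc |N (w x)| ≤ C * |w x| ^ (p + 1) := h1
        _ = C * ((w x ^ 2) ^ ((p - 1) / 2) * (w x ^ 2)) := by rw [e, e2, e4]
        _ ≤ C * (S ^ ((p - 1) / 2) * (w x ^ 2)) := by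
            apply mul_le_mul_of_nonneg_left _ hC0
            exact mul_le_mul_of_nonneg_right e3 (sq_nonneg _)
        _ = C * S ^ ((p - 1) / 2) * w x ^ 2 := by ring
    have hNbound : |∫ x, N (w x)| ≤ 2 * (C * S ^ ((p - 1) / 2)) := by
      have h1 : ‖∫ x, N (w x)‖ ≤ ∫ x, ‖N (w x)‖ := norm_integral_le_integral_norm _
      have h2 : (∫ x, ‖N (w x)‖) ≤ ∫ x, C * S ^ ((p - 1) / 2) * w x ^ 2 := by
        apply integral_mono hNint.norm (hwint.const_mul _)
        exact fun x => le_trans (le_of_eq (Real.norm_eq_abs _)) (hdom x)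
      have h3 : (∫ x, C * S ^ ((p - 1) / 2) * w x ^ 2) = C * S ^ ((p - 1) / 2) * 2 := by
        rw [integral_const_mul, hw2]
      rw [Real.norm_eq_abs] at h1
      linarith
    -- key: 2 * (C * S^((p-1)/2)) ≤ c5 * A j ^ θ
    have hkey : 2 * (C * S ^ ((p - 1) / 2)) ≤ c5 * A j ^ θ := by
      have hS : S = (2 * Real.sqrt 2) * A 1 := by
        rw [hSdef, hA0]; ring
      have hSr : S ^ ((p - 1) / 2)
          = (2 * Real.sqrt 2) ^ ((p - 1) / 2) * A 1 ^ ((p - 1) / 2) := by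
        rw [hS, Real.mul_rpow (by positivity) (hAnn 1)]
      have hA1r : A 1 ^ ((p - 1) / 2) = ((A 1 ^ j : ℝ)) ^ θ := by
        rw [← Real.rpow_natCast (A 1) j, ← Real.rpow_mul (hAnn 1), hθdef]
        congr 1
        field_simp
      have hA1b : ((A 1 ^ j : ℝ)) ^ θ ≤ (A 0 ^ (j - 1) * A j) ^ θ :=
        Real.rpow_le_rpow (pow_nonneg (hAnn 1) j) hchain hθ0
      have hmulr : (A 0 ^ (j - 1) * A j) ^ θ = (Real.sqrt 2 ^ (j - 1)) ^ θ * A j ^ θ := by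
        rw [hA0, Real.mul_rpow (by positivity) (hAnn j)]
      calc 2 * (C * S ^ ((p - 1) / 2))
          = 2 * C * (2 * Real.sqrt 2) ^ ((p - 1) / 2) * A 1 ^ ((p - 1) / 2) := by
            rw [hSr]; ring
        _ ≤ 2 * C * (2 * Real.sqrt 2) ^ ((p - 1) / 2) * ((Real.sqrt 2 ^ (j - 1)) ^ θ * A j ^ θ) := by
            apply mul_le_mul_of_nonneg_left _ (by positivity)
            rw [hA1r, ← hmulr]
            exact hA1b
        _ = c5 * A j ^ θ := by rw [hc5def]; ring
    have hyoung := hKx (A j) (hAnn j)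
    have hQj : A j ^ 2 = ∫ x, f j x ^ 2 := hAsq j
    have habs : (∫ x, N (w x)) ≤ 2 * (C * S ^ ((p - 1) / 2)) :=
      le_trans (le_abs_self _) hNbound
    rw [hsplit]
    have hfj : a * (∫ x, f j x ^ 2) = a * A j ^ 2 := by rw [hQj]
    nlinarith [hyoung, hkey, habs, hfj]
  · rw [integral_undef hInt]
    simpa using hK0
end

section
/- Let v_n ∈ H¹(ℝ) (n ∈ ℕ) with supp(v_n^{(1)}) ⊂ [−2M_n, 2M_n] and supp(v_n^{(2)}) ⊂ ℝ \ (−N_n/2, N_n/2), where M_n, N_n → ∞, M_n/N_n → 0, and ‖v_n^{(1)}‖_{L²}, ‖v_n^{(2)}‖_{L²} ≤ R. If L satisfies |Lv(x)| ≤ C̃₁ dist(x, supp(v))^{−1} ‖v‖_{L²} off the support of v, then ∫_ℝ v_n^{(2)} L v_n^{(1)} dx → 0 as n → ∞; in fact |∫ v_n^{(2)} L v_n^{(1)}| ≤ C̃₁ R² (4/(N_n(1 − 4M_n/N_n)))^{1/2} for large n. -/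
open MeasureTheory Filter Set
open scoped ENNReal

lemma dichotomy_int_aux {a b c : ℝ} (hab : a < b) (hb : 0 < b) (hc : 0 ≤ c) :
    IntegrableOn (fun x : ℝ => (c * (|x| - a)⁻¹) ^ 2) {x : ℝ | b ≤ |x|} volume ∧
    ∫ x in {x : ℝ | b ≤ |x|}, (c * (|x| - a)⁻¹) ^ 2 = c ^ 2 * (2 * (b - a)⁻¹) := by
  have hS : {x : ℝ | b ≤ |x|} = Iic (-b) ∪ Ici b := by
    ext x
    simp only [mem_setOf_eq, le_abs, mem_union, mem_Iic, mem_Ici]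
    constructor
    · rintro (h | h) <;> [right; left] <;> linarith
    · rintro (h | h) <;> [right; left] <;> linarith
  set F : ℝ → ℝ := fun x => (c * (x - a)⁻¹) ^ 2 with hF
  have hderiv : ∀ x ∈ Ici b, HasDerivAt (fun y => -(c ^ 2 * (y - a)⁻¹)) (F x) x := by
    intro x hx
    have hxa : (0:ℝ) < x - a := by simp only [mem_Ici] at hx; linarith
    have h1 : HasDerivAt (fun y : ℝ => y - a) 1 x := (hasDerivAt_id x).sub_const a
    have h2 := (h1.inv (ne_of_gt hxa)).const_mul (c ^ 2)
    have h3 := h2.neg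
    convert h3 using 1
    case e'_4 => rfl
    case e'_5 => rfl
    case e'_8 => rfl
    simp only [F]
    field_simp
    try ring
  have hF0 : ∀ x ∈ Ioi b, 0 ≤ F x := fun x _ => sq_nonneg _
  have htend : Tendsto (fun y : ℝ => -(c ^ 2 * (y - a)⁻¹)) atTop (nhds 0) := by
    have h1 : Tendsto (fun y : ℝ => y - a) atTop atTop :=
      tendsto_atTop_add_const_right atTop (-a) tendsto_id
    have h2 := (tendsto_inv_atTop_zero.comp h1).const_mul (c ^ 2)
    simpa using h2.neg
  have hint : IntegrableOn F (Ioi b) volume :=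
    integrableOn_Ioi_deriv_of_nonneg' hderiv hF0 htend
  have hval : ∫ x in Ioi b, F x = c ^ 2 * (b - a)⁻¹ := by
    have := integral_Ioi_of_hasDerivAt_of_nonneg' hderiv hF0 htend
    simpa using this
  -- right piece
  have hEqR : EqOn (fun x : ℝ => (c * (|x| - a)⁻¹) ^ 2) F (Ici b) := by
    intro x hx
    simp only [hF]
    rw [abs_of_pos (lt_of_lt_of_le hb hx)]
  have hintR : IntegrableOn (fun x : ℝ => (c * (|x| - a)⁻¹) ^ 2) (Ici b) volume :=
    ((integrableOn_Ici_iff_integrableOn_Ioi).mpr hint).congr (by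
      filter_upwards [ae_restrict_mem measurableSet_Ici] with x hx using (hEqR hx).symm)
  have hvalR : ∫ x in Ici b, (c * (|x| - a)⁻¹) ^ 2 = c ^ 2 * (b - a)⁻¹ := by
    rw [setIntegral_congr_fun measurableSet_Ici hEqR, integral_Ici_eq_integral_Ioi, hval]
  -- left piece
  have hEqL : EqOn (fun x : ℝ => (c * (|x| - a)⁻¹) ^ 2) (fun x => F (-x)) (Iic (-b)) := by
    intro x hx
    simp only [hF]
    rw [abs_of_neg (by simp only [mem_Iic] at hx; linarith)]
  have hintFneg : IntegrableOn (fun x : ℝ => F (-x)) (Iic (-b)) volume := by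
    have A : MeasurableEmbedding (fun x : ℝ => -x) :=
      (Homeomorph.neg ℝ).isClosedEmbedding.measurableEmbedding
    have hpre : MeasurePreserving (fun x : ℝ => -x) volume volume :=
      Measure.measurePreserving_neg _
    have hind : Integrable ((Ici b).indicator F) volume :=
      (integrable_indicator_iff measurableSet_Ici).mpr
        ((integrableOn_Ici_iff_integrableOn_Ioi).mpr hint)
    have h2 : Integrable ((Ici b).indicator F ∘ fun x : ℝ => -x) volume :=
      (hpre.integrable_comp_emb A).mpr hind
    have heq : ((Ici b).indicator F ∘ fun x : ℝ => -x) =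
        (Iic (-b)).indicator (fun x : ℝ => F (-x)) := by
      funext x
      by_cases hx : x ≤ -b
      · rw [Function.comp_apply, indicator_of_mem (by simp only [mem_Ici]; linarith),
          indicator_of_mem (by simpa using hx)]
      · push_neg at hx
        rw [Function.comp_apply, indicator_of_notMem (by simp only [mem_Ici, not_le]; linarith),
          indicator_of_notMem (by simp only [mem_Iic, not_le]; linarith)]
    rw [heq] at h2
    exact (integrable_indicator_iff measurableSet_Iic).mp h2
  have hintL : IntegrableOn (fun x : ℝ => (c * (|x| - a)⁻¹) ^ 2) (Iic (-b)) volume :=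
    hintFneg.congr (by
      filter_upwards [ae_restrict_mem measurableSet_Iic] with x hx using (hEqL hx).symm)
  have hvalL : ∫ x in Iic (-b), (c * (|x| - a)⁻¹) ^ 2 = c ^ 2 * (b - a)⁻¹ := by
    rw [setIntegral_congr_fun measurableSet_Iic hEqL]
    rw [integral_comp_neg_Iic (-b) F, neg_neg, hval]
  -- combine
  have hdisj : Disjoint (Iic (-b)) (Ici b) := by
    rw [Iic_disjoint_Ici]
    exact not_le.mpr (by linarith)
  constructor
  · rw [hS]
    exact hintL.union hintR
  · rw [hS, setIntegral_union hdisj measurableSet_Ici hintL hintR, hvalL, hvalR]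
    ring


/-- Splitting estimate: if `v_n^{(1)}` is supported in `[−2Mₙ, 2Mₙ]`, `v_n^{(2)}` outside
`(−Nₙ/2, Nₙ/2)`, with `Mₙ, Nₙ → ∞`, `Mₙ/Nₙ → 0`, `L²` norms bounded by `R`, and `L` has the
off-support kernel decay with constant `C̃₁`, then `∫ v_n^{(2)} L v_n^{(1)} → 0`; in fact
`|∫ v_n^{(2)} L v_n^{(1)}| ≤ C̃₁ R² (4/(Nₙ(1 − 4Mₙ/Nₙ)))^{1/2}` for large `n`. -/
theorem dichotomy_interaction_vanishes
    (L : (ℝ → ℝ) → (ℝ → ℝ)) (C₁ R : ℝ) (hC : 0 < C₁) (hR : 0 ≤ R)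
    (hL : ∀ v : ℝ → ℝ, HasCompactSupport v → MemLp v 2 volume →
      ∀ x : ℝ, x ∉ tsupport v →
        |L v x| ≤ C₁ / Metric.infDist x (tsupport v) * (eLpNorm v 2 volume).toReal)
    (f g : ℕ → ℝ → ℝ) (M N : ℕ → ℝ)
    (hM : Tendsto M atTop atTop) (hN : Tendsto N atTop atTop)
    (hMN : Tendsto (fun n => M n / N n) atTop (nhds 0))
    (hMpos : ∀ n, 0 < M n)
    (hfsupp : ∀ n, tsupport (f n) ⊆ Set.Icc (-(2 * M n)) (2 * M n))
    (hgsupp : ∀ n, tsupport (g n) ⊆ {x : ℝ | N n / 2 ≤ |x|})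
    (hfm : ∀ n, MemLp (f n) 2 volume) (hgm : ∀ n, MemLp (g n) 2 volume)
    (hfR : ∀ n, (eLpNorm (f n) 2 volume).toReal ≤ R)
    (hgR : ∀ n, (eLpNorm (g n) 2 volume).toReal ≤ R) :
    Tendsto (fun n => ∫ x : ℝ, g n x * L (f n) x) atTop (nhds 0) ∧
    ∀ᶠ n in atTop,
      |∫ x : ℝ, g n x * L (f n) x| ≤
        C₁ * R ^ 2 * Real.sqrt (4 / (N n * (1 - 4 * M n / N n))) := by
  have h8 : ∀ᶠ n in atTop, M n / N n < 1 / 8 := hMN.eventually_lt_const (by norm_num)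
  have hNpos : ∀ᶠ n in atTop, 0 < N n := hN.eventually_gt_atTop 0
  have key : ∀ n, 0 < N n → M n / N n < 1 / 8 →
      |∫ x : ℝ, g n x * L (f n) x| ≤
        C₁ * R ^ 2 * Real.sqrt (4 / (N n * (1 - 4 * M n / N n))) := by
    intro n hNn hMNn
    have hMn := hMpos n
    have hM8 : M n < 1 / 8 * N n := (div_lt_iff₀ hNn).mp hMNn
    set a : ℝ := 2 * M n with ha_def
    set b : ℝ := N n / 2 with hb_def
    set c : ℝ := C₁ * (eLpNorm (f n) 2 volume).toReal with hc_def
    have hab : a < b := by rw [ha_def, hb_def]; linarith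
    have hb : 0 < b := by rw [hb_def]; linarith
    have hc0 : 0 ≤ c := mul_nonneg hC.le ENNReal.toReal_nonneg
    obtain ⟨hψint2, hψval2⟩ := dichotomy_int_aux hab hb hc0
    set S : Set ℝ := {x : ℝ | b ≤ |x|} with hS_def
    set ψ : ℝ → ℝ := S.indicator (fun x => c * (|x| - a)⁻¹) with hψdef
    have hSmeas : MeasurableSet S := (isClosed_le continuous_const continuous_abs).measurableSet
    have hψmeas : AEStronglyMeasurable ψ volume :=
      ((measurable_const.mul ((measurable_abs.sub measurable_const).inv)).indicator
        hSmeas).aestronglyMeasurable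
    have hψsq : (fun x => ψ x ^ 2) = S.indicator (fun x => (c * (|x| - a)⁻¹) ^ 2) := by
      funext x
      by_cases hx : x ∈ S
      · rw [hψdef, indicator_of_mem hx, indicator_of_mem hx]
      · rw [hψdef, indicator_of_notMem hx, indicator_of_notMem hx]; norm_num
    have hψ2int : Integrable (fun x => ψ x ^ 2) volume := by
      rw [hψsq]; exact (integrable_indicator_iff hSmeas).mpr hψint2
    have hψmem : MemLp ψ 2 volume := (memLp_two_iff_integrable_sq hψmeas).mpr hψ2int
    have hψnonneg : ∀ x, 0 ≤ ψ x := by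
      intro x
      rw [hψdef]
      apply indicator_nonneg
      intro y hy
      have hby : b ≤ |y| := hy
      have : (0:ℝ) < |y| - a := by linarith
      positivity
    have hfcs : HasCompactSupport (f n) :=
      IsCompact.of_isClosed_subset isCompact_Icc (isClosed_tsupport _) (hfsupp n)
    have hLb : ∀ x ∈ S, |L (f n) x| ≤ c * (|x| - a)⁻¹ := by
      intro x hxS
      have hxb : b ≤ |x| := hxS
      have hxa : (0:ℝ) < |x| - a := by linarith
      have hxnot : x ∉ tsupport (f n) := by
        intro hmem
        have h1 := hfsupp n hmem
        rw [Set.mem_Icc] at h1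
        have h2 : |x| ≤ a := abs_le.mpr ⟨h1.1, h1.2⟩
        linarith
      have hLx := hL (f n) hfcs (hfm n) x hxnot
      rcases eq_empty_or_nonempty (tsupport (f n)) with hemp | hne
      · have hf0 : f n = 0 := tsupport_eq_empty_iff.mp hemp
        have hz : eLpNorm (f n) 2 volume = 0 := by rw [hf0]; exact eLpNorm_zero
        rw [hz] at hLx
        simp only [ENNReal.toReal_zero, mul_zero] at hLx
        have : 0 ≤ c * (|x| - a)⁻¹ := by positivity
        linarith
      · have hd : |x| - a ≤ Metric.infDist x (tsupport (f n)) := by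
          by_contra hlt
          push_neg at hlt
          obtain ⟨y, hy, hdy⟩ := (Metric.infDist_lt_iff hne).mp hlt
          have h1 := hfsupp n hy
          rw [Set.mem_Icc] at h1
          have h2 : |y| ≤ a := abs_le.mpr ⟨h1.1, h1.2⟩
          have h3 : |x| - |y| ≤ |x - y| := abs_sub_abs_le_abs_sub x y
          rw [Real.dist_eq] at hdy
          linarith
        calc |L (f n) x| ≤ C₁ / Metric.infDist x (tsupport (f n)) *
              (eLpNorm (f n) 2 volume).toReal := hLx
          _ ≤ C₁ / (|x| - a) * (eLpNorm (f n) 2 volume).toReal := by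
              gcongr
          _ = c * (|x| - a)⁻¹ := by rw [hc_def]; ring
    have hpt : ∀ x, |g n x * L (f n) x| ≤ |g n x| * ψ x := by
      intro x
      by_cases hx : x ∈ tsupport (g n)
      · have hxS : x ∈ S := by
          have := hgsupp n hx
          simpa [hS_def, hb_def] using this
        rw [abs_mul, hψdef, indicator_of_mem hxS]
        exact mul_le_mul_of_nonneg_left (hLb x hxS) (abs_nonneg _)
      · rw [image_eq_zero_of_notMem_tsupport hx]
        simp [hψnonneg x]
    by_cases hI : Integrable (fun x => g n x * L (f n) x) volume
    · have hgabs : MemLp (fun x => |g n x|) 2 volume := (hgm n).abs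
      have hmulint : Integrable (fun x => |g n x| * ψ x) volume := by
        have hsum : (1:ℝ≥0∞) / 1 = 1 / 2 + 1 / 2 := by
          rw [ENNReal.div_add_div_same]; norm_num
          exact (ENNReal.div_self two_ne_zero ENNReal.ofNat_ne_top).symm
        have := hψmem.smul (φ := fun x => |g n x|) hgabs (r := 1)
        rw [memLp_one_iff_integrable] at this
        exact this
      have hH := integral_mul_le_Lp_mul_Lq_of_nonneg (μ := volume)
        (Real.HolderConjugate.two_two : Real.HolderConjugate 2 2)
        (f := fun x => |g n x|) (g := ψ)
        (Eventually.of_forall fun x => abs_nonneg _)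
        (Eventually.of_forall hψnonneg)
        (by rw [show ENNReal.ofReal 2 = 2 by norm_num]; exact hgabs)
        (by rw [show ENNReal.ofReal 2 = 2 by norm_num]; exact hψmem)
      have hg2le : (∫ x, |g n x| ^ (2:ℝ)) ^ ((1:ℝ)/2) ≤ R := by
        have h := (hgm n).eLpNorm_eq_integral_rpow_norm two_ne_zero ENNReal.ofNat_ne_top
        have h2 : (eLpNorm (g n) 2 volume).toReal = (∫ x, |g n x| ^ (2:ℝ)) ^ ((1:ℝ)/2) := by
          rw [h, ENNReal.toReal_ofReal (by positivity)]
          norm_num [Real.norm_eq_abs]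
        rw [← h2]
        exact hgR n
      have hψ2val : (∫ x, ψ x ^ (2:ℝ)) ^ ((1:ℝ)/2) = c * Real.sqrt (2 * (b - a)⁻¹) := by
        have hrp : (fun x => ψ x ^ (2:ℝ)) = fun x => ψ x ^ 2 := by
          funext x
          rw [show (2:ℝ) = ((2:ℕ):ℝ) by norm_num, Real.rpow_natCast]
        rw [hrp]
        have hint2 : ∫ x, ψ x ^ 2 = c ^ 2 * (2 * (b - a)⁻¹) := by
          rw [hψsq, integral_indicator hSmeas]
          exact hψval2
        rw [hint2, ← Real.sqrt_eq_rpow, Real.sqrt_mul (sq_nonneg c), Real.sqrt_sq hc0]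
      have hcle : c ≤ C₁ * R := mul_le_mul_of_nonneg_left (hfR n) hC.le
      have harg : 2 * (b - a)⁻¹ = 4 / (N n * (1 - 4 * M n / N n)) := by
        have hNne : N n ≠ 0 := ne_of_gt hNn
        have hba : b - a ≠ 0 := ne_of_gt (by linarith)
        rw [ha_def, hb_def] at hba ⊢
        field_simp
        ring
      calc |∫ x : ℝ, g n x * L (f n) x| ≤ ∫ x : ℝ, |g n x * L (f n) x| := by
            simpa [Real.norm_eq_abs, abs_mul] using norm_integral_le_integral_norm
              (fun x => g n x * L (f n) x) (μ := volume)
        _ ≤ ∫ x, |g n x| * ψ x := integral_mono hI.abs hmulint hpt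
        _ ≤ (∫ x, |g n x| ^ (2:ℝ)) ^ ((1:ℝ)/2) * (∫ x, ψ x ^ (2:ℝ)) ^ ((1:ℝ)/2) := hH
        _ ≤ R * (c * Real.sqrt (2 * (b - a)⁻¹)) := by
            rw [hψ2val]
            apply mul_le_mul_of_nonneg_right hg2le
            positivity
        _ ≤ R * (C₁ * R * Real.sqrt (2 * (b - a)⁻¹)) :=
            mul_le_mul_of_nonneg_left
              (mul_le_mul_of_nonneg_right hcle (Real.sqrt_nonneg _)) hR
        _ = C₁ * R ^ 2 * Real.sqrt (4 / (N n * (1 - 4 * M n / N n))) := by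
            rw [← harg]; ring
    · rw [integral_undef hI, abs_zero]
      positivity
  have hbound : ∀ᶠ n in atTop,
      |∫ x : ℝ, g n x * L (f n) x| ≤
        C₁ * R ^ 2 * Real.sqrt (4 / (N n * (1 - 4 * M n / N n))) := by
    filter_upwards [h8, hNpos] with n h1 h2
    exact key n h2 h1
  refine ⟨?_, hbound⟩
  have h1 : Tendsto (fun n => N n * (1 - 4 * M n / N n)) atTop atTop := by
    apply tendsto_atTop_mono' atTop ?_ (hN.atTop_div_const (by norm_num : (0:ℝ) < 2))
    filter_upwards [h8, hNpos] with n hn hNn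
    have hM8 : M n < 1 / 8 * N n := (div_lt_iff₀ hNn).mp hn
    have h4 : 4 * M n / N n < 1 / 2 := by
      rw [div_lt_iff₀ hNn]; linarith
    have h5 : (1:ℝ)/2 ≤ 1 - 4 * M n / N n := by linarith
    calc N n / 2 = N n * (1/2) := by ring
      _ ≤ N n * (1 - 4 * M n / N n) := by
          apply mul_le_mul_of_nonneg_left h5 hNn.le
  have h2 : Tendsto (fun n => 4 / (N n * (1 - 4 * M n / N n))) atTop (nhds 0) :=
    tendsto_const_nhds.div_atTop h1
  have h3 : Tendsto (fun n => Real.sqrt (4 / (N n * (1 - 4 * M n / N n)))) atTop (nhds 0) := by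
    have h3' := h2.sqrt
    rwa [Real.sqrt_zero] at h3'
  have h4 : Tendsto (fun n => C₁ * R ^ 2 * Real.sqrt (4 / (N n * (1 - 4 * M n / N n))))
      atTop (nhds 0) := by
    have h4' := h3.const_mul (C₁ * R ^ 2)
    rwa [mul_zero] at h4'
  apply squeeze_zero_norm' ?_ h4
  filter_upwards [hbound] with n hn
  simpa [Real.norm_eq_abs] using hn
end
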